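/- Concavity of the improved majorized loss for α ∈ [2/3, 1): the function J_α^♭(u) = (1/(α(α−1)))((1 − (1−α)^2 u)_+^{α/(2(1−α))} − 1) is concave on [0,∞). -/

import Mathlib

/-- Concavity of the improved majorized loss `J_α^♭` on `[0,∞)` for `α ∈ [2/3, 1)`. -/
theorem improved_loss_concave (α : ℝ) (hα : α ∈ Set.Ico (2/3 : ℝ) 1) :
    ConcaveOn ℝ (Set.Ici (0:ℝ))
      (fun u : ℝ =>
        (1 / (α * (α - 1))) * ((max (1 - (1 - α) ^ 2 * u) 0) ^ (α / (2 * (1 - α))) - 1)) := by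
  obtain ⟨hα1, hα2⟩ := hα
  set c : ℝ := (1 - α) ^ 2 with hc
  set β : ℝ := α / (2 * (1 - α)) with hβ
  have h1α : (0:ℝ) < 1 - α := by linarith
  have hβ1 : 1 ≤ β := by
    rw [hβ, le_div_iff₀ (by linarith)]
    linarith
  have hβ0 : (0:ℝ) ≤ β := by linarith
  -- inner function f(u) = max (1 - c*u) 0 is convex
  have haff : ConvexOn ℝ (Set.Ici (0:ℝ)) (fun u : ℝ => 1 - c * u) := by
    refine ⟨convex_Ici 0, ?_⟩
    intro x _ y _ a b ha hb hab
    simp only [smul_eq_mul]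
    nlinarith [hab]
  have hinner : ConvexOn ℝ (Set.Ici (0:ℝ)) (fun u : ℝ => max (1 - c * u) 0) := by
    have := haff.sup (convexOn_const (0:ℝ) (convex_Ici 0))
    simpa [Pi.sup_def] using this
  have hG : ConvexOn ℝ (Set.Ici (0:ℝ))
      (fun u : ℝ => (max (1 - c * u) 0) ^ β) := by
    refine ⟨convex_Ici 0, ?_⟩
    intro x hx y hy a b ha hb hab
    simp only [smul_eq_mul]
    have h1 := hinner.2 hx hy ha hb hab
    simp only [smul_eq_mul] at h1
    calc (max (1 - c * (a * x + b * y)) 0) ^ β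
        ≤ (a * max (1 - c * x) 0 + b * max (1 - c * y) 0) ^ β :=
          Real.rpow_le_rpow (le_max_right _ _) h1 hβ0
      _ ≤ a * (max (1 - c * x) 0) ^ β + b * (max (1 - c * y) 0) ^ β := by
          have := (convexOn_rpow hβ1).2 (Set.mem_Ici.mpr (le_max_right (1 - c * x) 0))
            (Set.mem_Ici.mpr (le_max_right (1 - c * y) 0)) ha hb hab
          simpa using this
  -- multiply by negative constant
  have hk : (0:ℝ) ≤ -(1 / (α * (α - 1))) := by
    have : α * (α - 1) < 0 := mul_neg_of_pos_of_neg (by linarith) (by linarith)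
    have := one_div_neg.mpr this
    linarith
  have hneg : ConcaveOn ℝ (Set.Ici (0:ℝ))
      (fun u : ℝ => -((max (1 - c * u) 0) ^ β - 1)) := by
    have := (hG.sub (concaveOn_const (1:ℝ) (convex_Ici 0))).neg
    simpa only [Pi.neg_def, Pi.sub_def] using this
  have := hneg.smul hk
  convert this using 2 with u
  · rfl
  · rfl
  simp only [smul_eq_mul]
  ring
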